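/- Let G_n be the toroidal mesh of size n with the majority coloring process of threshold 2. If p = p(n) satisfies 0 ≤ p(n) ≤ 0.012/ln(n) for all sufficiently large n, then the probability (under the product Bernoulli(p(n)) measure) that the random seed set S^p is a dynamo on G_n tends to 0 as n → ∞. -/

import Mathlib

open MeasureTheory Filter

/-- The toroidal mesh of size `n`: vertices `(ZMod n) × (ZMod n)`, with `(i,j)`
adjacent to `(i±1,j)` and `(i,j±1)`. -/
def torus (n : ℕ) : SimpleGraph (ZMod n × ZMod n) :=
  SimpleGraph.fromRel (fun v w => w = (v.1 + 1, v.2) ∨ w = (v.1, v.2 + 1))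

/-- One step of the majority coloring process with threshold 2: a vertex turns black
if it has at least two black neighbors; black vertices stay black. -/
def colorStep {V : Type*} (G : SimpleGraph V) (S : Set V) : Set V :=
  S ∪ {v | ∃ u w, u ≠ w ∧ G.Adj v u ∧ G.Adj v w ∧ u ∈ S ∧ w ∈ S}

/-- `S` is a dynamo if every vertex eventually turns black. -/
def IsDynamo {V : Type*} (G : SimpleGraph V) (S : Set V) : Prop :=
  ∀ v, ∃ t, v ∈ (colorStep G)^[t] S

/-- The Bernoulli(p) measure on `Bool`. -/
noncomputable def bernoulliMeasure (p : ℝ) : Measure Bool :=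
  ENNReal.ofReal p • Measure.dirac true + ENNReal.ofReal (1 - p) • Measure.dirac false

instance (p : ℝ) : IsFiniteMeasure (bernoulliMeasure p) := by
  constructor
  simp [bernoulliMeasure, ENNReal.add_lt_top, ENNReal.ofReal_lt_top]

/-- The product Bernoulli(p) measure on subsets (indicator functions) of `V`. -/
noncomputable def seedMeasure (V : Type*) [Fintype V] (p : ℝ) : Measure (V → Bool) :=
  Measure.pi fun _ => bernoulliMeasure p

namespace TorusProof

variable {V' : Type*} (G : SimpleGraph V')

/-- A set is closed if no new vertex can be infected from it. -/
def Closed (F : Set V') : Prop :=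
  ∀ (v u w : V'), u ≠ w → G.Adj v u → G.Adj v w → u ∈ F → w ∈ F → v ∈ F

/-- Bootstrap closure of a set. -/
def cl (A : Set V') : Set V' := ⋂₀ {F | A ⊆ F ∧ Closed G F}

variable {G}

lemma subset_cl {A : Set V'} : A ⊆ cl G A := fun x hx F hF => hF.1 hx

lemma cl_subset {A F : Set V'} (h1 : A ⊆ F) (h2 : Closed G F) : cl G A ⊆ F :=
  fun x hx => hx F ⟨h1, h2⟩

lemma closed_cl {A : Set V'} : Closed G (cl G A) := by
  intro v u w huw hu hw hmu hmw F hF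
  exact hF.2 v u w huw hu hw (hmu F hF) (hmw F hF)

lemma cl_mono {A B : Set V'} (h : A ⊆ B) : cl G A ⊆ cl G B :=
  cl_subset (h.trans subset_cl) closed_cl

lemma iterate_subset_cl {A : Set V'} : ∀ t, (colorStep G)^[t] A ⊆ cl G A := by
  intro t
  induction t with
  | zero => simpa using subset_cl
  | succ t ih =>
    rw [Function.iterate_succ_apply']
    rintro v (hv | ⟨u, w, huw, hu, hw, hmu, hmw⟩)
    · exact ih hv
    · exact closed_cl v u w huw hu hw (ih hmu) (ih hmw)

lemma cl_induction [Finite V'] {A : Set V'} {P : Set V' → Prop} (h0 : P ∅)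
    (hseed : ∀ F v, P F → v ∈ A → P (insert v F))
    (hinf : ∀ F v, P F → (∃ u w, u ≠ w ∧ G.Adj v u ∧ G.Adj v w ∧ u ∈ F ∧ w ∈ F) →
      P (insert v F)) : P (cl G A) := by
  have main : ∀ (j : ℕ) (F : Set V'), (Set.univ \ F).ncard ≤ j → F ⊆ cl G A → P F →
      P (cl G A) := by
    intro j
    induction j with
    | zero =>
      intro F hc hsub hP
      have hfin : (Set.univ \ F).Finite := Set.toFinite _
      have hempty : Set.univ \ F = ∅ := by
        rw [← Set.ncard_eq_zero hfin]; omega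
      have hF : F = Set.univ := by
        apply Set.eq_univ_of_forall
        intro x
        by_contra hx
        have : x ∈ Set.univ \ F := ⟨trivial, hx⟩
        rw [hempty] at this
        exact this
      have h1 : cl G A ⊆ F := hF ▸ Set.subset_univ _
      have : F = cl G A := Set.Subset.antisymm hsub h1
      rwa [this] at hP
    | succ j ih =>
      intro F hc hsub hP
      by_cases hcl : A ⊆ F ∧ Closed G F
      · have h1 : cl G A ⊆ F := cl_subset hcl.1 hcl.2
        have : F = cl G A := Set.Subset.antisymm hsub h1
        rwa [this] at hP
      · have hdec : ∀ v, v ∉ F → (Set.univ \ insert v F).ncard ≤ j := by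
          intro v hv
          have hvMem : v ∈ Set.univ \ F := ⟨trivial, hv⟩
          have heq : Set.univ \ insert v F = (Set.univ \ F) \ {v} := by
            ext x; simp [Set.mem_diff, Set.mem_insert_iff]; tauto
          have hlt : ((Set.univ \ F) \ {v}).ncard < (Set.univ \ F).ncard :=
            Set.ncard_diff_singleton_lt_of_mem hvMem (Set.toFinite _)
          rw [heq]; omega
        rcases not_and_or.1 hcl with hA | hClosed
        · obtain ⟨s, hsA, hsF⟩ : ∃ s, s ∈ A ∧ s ∉ F := by
            by_contra h
            push_neg at h
            exact hA (fun x hx => h x hx)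
          exact ih (insert s F) (hdec s hsF)
            (Set.insert_subset (subset_cl hsA) hsub) (hseed F s hP hsA)
        · simp only [Closed, not_forall] at hClosed
          obtain ⟨v, u, w, huw, hu, hw, hmu, hmw, hv⟩ := hClosed
          have hvcl : v ∈ cl G A := closed_cl v u w huw hu hw (hsub hmu) (hsub hmw)
          exact ih (insert v F) (hdec v hv)
            (Set.insert_subset hvcl hsub) (hinf F v hP ⟨u, w, huw, hu, hw, hmu, hmw⟩)
  exact main ((Set.univ \ (∅ : Set V')).ncard) ∅ le_rfl (Set.empty_subset _) h0

/-- Reachability inside a set of vertices. -/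
inductive ReachIn (G : SimpleGraph V') (C : Set V') (u : V') : V' → Prop
  | refl (h : u ∈ C) : ReachIn G C u u
  | tail {v w : V'} (huv : ReachIn G C u v) (hadj : G.Adj v w) (hw : w ∈ C) :
      ReachIn G C u w

lemma ReachIn.mem_left {C : Set V'} {u v : V'} (h : ReachIn G C u v) : u ∈ C := by
  induction h with
  | refl hv => exact hv
  | tail _ _ _ ih => exact ih

lemma ReachIn.mem_right {C : Set V'} {u v : V'} (h : ReachIn G C u v) : v ∈ C := by
  induction h with
  | refl hv => exact hv
  | tail _ _ hw _ => exact hw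

lemma ReachIn.mono {C D : Set V'} (hCD : C ⊆ D) {u v : V'} (h : ReachIn G C u v) :
    ReachIn G D u v := by
  induction h with
  | refl hv => exact .refl (hCD hv)
  | tail _ hadj hw ih => exact .tail ih hadj (hCD hw)

lemma ReachIn.trans {C : Set V'} {u v w : V'} (h1 : ReachIn G C u v)
    (h2 : ReachIn G C v w) : ReachIn G C u w := by
  induction h2 with
  | refl => exact h1
  | tail _ hadj hw ih => exact .tail ih hadj hw

lemma ReachIn.symm {C : Set V'} {u v : V'} (h : ReachIn G C u v) : ReachIn G C v u := by
  induction h with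
  | refl h => exact .refl h
  | @tail v' w' huv hadj hw ih =>
    exact ReachIn.trans (.tail (.refl hw) hadj.symm huv.mem_right) ih

/-- Discrete intermediate value theorem along a path. -/
lemma ReachIn.ivt {C : Set V'} {g : V' → ℤ}
    (hstep : ∀ a b, a ∈ C → b ∈ C → G.Adj a b → |g b - g a| ≤ 1)
    {u v : V'} (h : ReachIn G C u v) :
    ∀ x : ℤ, g u ≤ x → x ≤ g v → ∃ z ∈ C, g z = x := by
  induction h with
  | refl hu =>
    intro x h1 h2
    exact ⟨u, hu, le_antisymm h1 h2⟩
  | @tail v' w' huv hadj hw ih =>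
    intro x h1 h2
    by_cases hx : x ≤ g v'
    · exact ih x h1 hx
    · refine ⟨w', hw, ?_⟩
      have habs := hstep v' w' huv.mem_right hw hadj
      rw [abs_le] at habs
      omega

lemma exists_boundary_edge {A : Set V'} {u w : V'}
    (p : G.Walk u w) : u ∈ A → w ∉ A →
    ∃ a b, G.Adj a b ∧ a ∈ A ∧ b ∉ A := by
  induction p with
  | nil => intro hu hw; exact absurd hu hw
  | @cons a b c hadj q ih =>
    intro hu hw
    by_cases hb : b ∈ A
    · exact ih hb hw
    · exact ⟨a, b, hadj, hu, hb⟩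


abbrev TV (n : ℕ) := ZMod n × ZMod n

lemma zmod_one_ne_zero {n : ℕ} (hn : 2 ≤ n) : (1 : ZMod n) ≠ 0 := by
  haveI : NeZero n := ⟨by omega⟩
  intro h
  have h2 := congrArg ZMod.val h
  rw [ZMod.val_zero] at h2
  have h3 : ((1:ℕ) : ZMod n).val = 1 % n := ZMod.val_natCast n 1
  rw [Nat.cast_one] at h3
  rw [h3, Nat.mod_eq_of_lt (by omega)] at h2
  omega

lemma torus_adj_iff {n : ℕ} (hn : 2 ≤ n) (v w : TV n) :
    (torus n).Adj v w ↔
      (w = v + (1, 0) ∨ w = v - (1, 0) ∨ w = v + (0, 1) ∨ w = v - (0, 1)) := by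
  have hone : (1 : ZMod n) ≠ 0 := zmod_one_ne_zero hn
  rw [torus, SimpleGraph.fromRel_adj]
  constructor
  · rintro ⟨hne, (h | h) | (h | h)⟩
    · left; rw [h, Prod.ext_iff]; constructor <;> simp
    · right; right; left; rw [h, Prod.ext_iff]; constructor <;> simp
    · right; left; rw [h, Prod.ext_iff]
      constructor <;> simp
    · right; right; right; rw [h, Prod.ext_iff]
      constructor <;> simp
  · rintro (h | h | h | h)
    · refine ⟨?_, Or.inl (Or.inl ?_)⟩
      · intro he
        apply hone
        have h1 := congrArg Prod.fst (he.trans h)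
        simp only [Prod.fst_add] at h1
        linear_combination -h1
      · rw [h, Prod.ext_iff]; constructor <;> simp
    · refine ⟨?_, Or.inr (Or.inl ?_)⟩
      · intro he
        apply hone
        have h1 := congrArg Prod.fst (he.trans h)
        simp only [Prod.fst_sub] at h1
        linear_combination h1
      · rw [h, Prod.ext_iff]
        constructor <;> simp
    · refine ⟨?_, Or.inl (Or.inr ?_)⟩
      · intro he
        apply hone
        have h1 := congrArg Prod.snd (he.trans h)
        simp only [Prod.snd_add] at h1
        linear_combination -h1
      · rw [h, Prod.ext_iff]; constructor <;> simp
    · refine ⟨?_, Or.inr (Or.inr ?_)⟩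
      · intro he
        apply hone
        have h1 := congrArg Prod.snd (he.trans h)
        simp only [Prod.snd_sub] at h1
        linear_combination h1
      · rw [h, Prod.ext_iff]
        constructor <;> simp

lemma adj_add_e1 {n : ℕ} (hn : 2 ≤ n) (v : TV n) : (torus n).Adj v (v + (1, 0)) :=
  (torus_adj_iff hn v _).2 (Or.inl rfl)

lemma adj_add_e2 {n : ℕ} (hn : 2 ≤ n) (v : TV n) : (torus n).Adj v (v + (0, 1)) :=
  (torus_adj_iff hn v _).2 (Or.inr (Or.inr (Or.inl rfl)))

lemma torus_reachable {n : ℕ} (hn : 2 ≤ n) (v w : TV n) : (torus n).Reachable v w := by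
  haveI : NeZero n := ⟨by omega⟩
  have main : ∀ (a b : ℕ) (x : TV n),
      (torus n).Reachable x (x + ((a : ZMod n), (b : ZMod n))) := by
    intro a
    induction a with
    | zero =>
      intro b
      induction b with
      | zero =>
        intro x
        have he : x + (((0:ℕ):ZMod n), ((0:ℕ):ZMod n)) = x := by
          rw [Prod.ext_iff]; constructor <;> push_cast <;> simp
        rw [he]
      | succ b ihb =>
        intro x
        refine (ihb x).trans ?_
        have he : x + (((0:ℕ):ZMod n), ((b+1 : ℕ) : ZMod n))
            = (x + (((0:ℕ):ZMod n), ((b:ℕ) : ZMod n))) + (0, 1) := by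
          rw [Prod.ext_iff]
          constructor <;> push_cast <;> simp <;> ring
        rw [he]
        exact (adj_add_e2 hn _).reachable
    | succ a iha =>
      intro b x
      refine (iha b x).trans ?_
      have he : x + (((a+1 : ℕ) : ZMod n), ((b:ℕ) : ZMod n))
          = (x + (((a:ℕ) : ZMod n), ((b:ℕ) : ZMod n))) + (1, 0) := by
        rw [Prod.ext_iff]
        constructor <;> push_cast <;> simp <;> ring
      rw [he]
      exact (adj_add_e1 hn _).reachable
  have hw : w = v + (((w.1 - v.1).val : ZMod n), ((w.2 - v.2).val : ZMod n)) := by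
    rw [ZMod.natCast_val, ZMod.natCast_val, ZMod.cast_id, ZMod.cast_id]
    rw [Prod.ext_iff]
    constructor <;> simp
  rw [hw]
  exact main _ _ v

/-- Chebyshev ball in the torus. -/
def ball {n : ℕ} (c : TV n) (r : ℤ) : Set (TV n) :=
  {w | ∃ d1 d2 : ℤ, |d1| ≤ r ∧ |d2| ≤ r ∧ w = c + ((d1 : ZMod n), (d2 : ZMod n))}

lemma self_mem_ball {n : ℕ} (c : TV n) {r : ℤ} (hr : 0 ≤ r) : c ∈ ball c r :=
  ⟨0, 0, by simpa using hr, by simpa using hr, by simp⟩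

lemma adj_mem_ball {n : ℕ} (hn : 2 ≤ n) {v w : TV n} (h : (torus n).Adj v w) :
    w ∈ ball v 1 := by
  rcases (torus_adj_iff hn v w).1 h with h | h | h | h
  · exact ⟨1, 0, by norm_num, by norm_num, by rw [h]; push_cast; rfl⟩
  · refine ⟨-1, 0, by norm_num, by norm_num, ?_⟩
    rw [h, Prod.ext_iff]; constructor <;> push_cast <;> simp <;> ring
  · exact ⟨0, 1, by norm_num, by norm_num, by rw [h]; push_cast; rfl⟩
  · refine ⟨0, -1, by norm_num, by norm_num, ?_⟩
    rw [h, Prod.ext_iff]; constructor <;> push_cast <;> simp <;> ring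

lemma ball_merge {n : ℕ} {C : Set (TV n)} {c a v : TV n} {r : ℤ}
    (hC : C ⊆ ball c r) (haC : a ∈ C) (hav : a ∈ ball v 1) :
    C ⊆ ball v (2 * r + 1) := by
  obtain ⟨d1, d2, hd1, hd2, ha⟩ := hC haC
  obtain ⟨e1, e2, he1, he2, ha2⟩ := hav
  intro w hw
  obtain ⟨f1, f2, hf1, hf2, hwEq⟩ := hC hw
  have h0 : 0 ≤ r := le_trans (abs_nonneg _) hd1
  refine ⟨e1 + f1 - d1, e2 + f2 - d2, ?_, ?_, ?_⟩
  · rw [abs_le] at *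
    constructor <;> omega
  · rw [abs_le] at *
    constructor <;> omega
  · have hceq : c = v + (((e1 - d1 : ℤ) : ZMod n), ((e2 - d2 : ℤ) : ZMod n)) := by
      have h1 : c + (((d1 : ℤ) : ZMod n), ((d2 : ℤ) : ZMod n))
          = v + (((e1 : ℤ) : ZMod n), ((e2 : ℤ) : ZMod n)) := by rw [← ha, ← ha2]
      have h2 := congrArg
        (fun x => x - (((d1 : ℤ) : ZMod n), ((d2 : ℤ) : ZMod n))) h1
      simp only [add_sub_cancel_right] at h2
      rw [h2, Prod.ext_iff]
      constructor <;> push_cast <;> simp <;> ring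
    rw [hwEq, hceq, Prod.ext_iff]
    constructor <;> push_cast <;> simp <;> ring

/-! ### Integer representative machinery -/

lemma my_dvd_zero {N x : ℤ} (h : N ∣ x) (hb : |x| < N) : x = 0 := by
  have hN : 0 < N := lt_of_le_of_lt (abs_nonneg x) hb
  rcases h with ⟨m, rfl⟩
  rw [abs_lt] at hb
  have hm1 : m < 1 := by nlinarith [hb.2]
  have hm2 : -1 < m := by nlinarith [hb.1]
  have : m = 0 := by omega
  rw [this, mul_zero]

lemma my_dvd_neg {N x : ℤ} (hN : 0 < N) (h : N ∣ x) (h1 : -(2*N) < x) (h2 : x < 0) :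
    x = -N := by
  have hdvd : N ∣ x + N := dvd_add h (dvd_refl N)
  have hz : x + N = 0 := my_dvd_zero hdvd (by rw [abs_lt]; omega)
  omega

lemma cast_inj_small {n : ℕ} [NeZero n] {B : ℤ} {d d' : ℤ} (hd : |d| ≤ B) (hd' : |d'| ≤ B)
    (hn : 2*B < n) (he : (d : ZMod n) = (d' : ZMod n)) : d = d' := by
  have hdvd : (n:ℤ) ∣ d' - d := Int.ModEq.dvd ((ZMod.intCast_eq_intCast_iff d d' n).1 he)
  have h0 : d' - d = 0 := my_dvd_zero hdvd (by rw [abs_le] at hd hd'; rw [abs_lt]; omega)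
  omega

lemma natCast_inj_small {n : ℕ} [NeZero n] {a b : ℕ} (ha : a < n) (hb : b < n)
    (h : (a : ZMod n) = (b : ZMod n)) : a = b := by
  have h2 := congrArg ZMod.val h
  rwa [ZMod.val_cast_of_lt ha, ZMod.val_cast_of_lt hb] at h2

lemma val_intCast_small {n : ℕ} [NeZero n] {d : ℤ} (h0 : 0 ≤ d) (hlt : d < n) :
    (((d : ZMod n)).val : ℤ) = d := by
  lift d to ℕ using h0 with m
  have hm : m < n := by exact_mod_cast hlt
  have h1 : ((m : ℤ) : ZMod n) = ((m : ℕ) : ZMod n) := by push_cast; rfl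
  rw [h1, ZMod.val_cast_of_lt hm]

/-- Centered representative: values in `[-(n - 2k), 2k-1]`. -/
def crep {n : ℕ} (k : ℕ) (z : ZMod n) : ℤ :=
  if (z.val : ℤ) ≤ 2*k - 1 then (z.val : ℤ) else (z.val : ℤ) - n

lemma crep_cast {n : ℕ} [NeZero n] (k : ℕ) (z : ZMod n) :
    ((crep k z : ℤ) : ZMod n) = z := by
  have hv : ((z.val : ℕ) : ZMod n) = z := ZMod.natCast_rightInverse z
  unfold crep
  split
  · exact_mod_cast hv
  · push_cast
    rw [ZMod.natCast_self, hv]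
    ring

lemma crep_spec {n k : ℕ} [NeZero n] (hn : 4*k ≤ n) {d : ℤ} (hd : |d| ≤ 2*(k:ℤ) - 1)
    {z : ZMod n} (hz : z = (d : ZMod n)) : crep k z = d := by
  have hv : ((z.val : ℕ) : ZMod n) = z := ZMod.natCast_rightInverse z
  have hvlt : z.val < n := ZMod.val_lt z
  have hcast : ((z.val : ℤ) : ZMod n) = (d : ZMod n) := by
    rw [← hz]; exact_mod_cast hv
  have hdvd : (n:ℤ) ∣ d - (z.val : ℤ) :=
    Int.ModEq.dvd ((ZMod.intCast_eq_intCast_iff _ _ _).1 hcast)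
  rw [abs_le] at hd
  have hn0 : (0:ℤ) < n := by
    have := Nat.pos_of_ne_zero (NeZero.ne n); exact_mod_cast this
  have hk4 : 4*(k:ℤ) ≤ n := by exact_mod_cast hn
  unfold crep
  split
  · rename_i hle
    have : d - (z.val : ℤ) = 0 := my_dvd_zero hdvd (by rw [abs_lt]; omega)
    omega
  · rename_i hgt
    push_neg at hgt
    have : d - (z.val : ℤ) = -(n:ℤ) := my_dvd_neg hn0 hdvd (by omega) (by omega)
    omega

/-! ### Coordinates relative to a base point -/

def co1 {n : ℕ} (q x : TV n) : ℕ := ((x - q).1).val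
def co2 {n : ℕ} (q x : TV n) : ℕ := ((x - q).2).val

lemma co1_lt {n : ℕ} [NeZero n] (q x : TV n) : co1 q x < n := ZMod.val_lt _
lemma co2_lt {n : ℕ} [NeZero n] (q x : TV n) : co2 q x < n := ZMod.val_lt _

lemma point_eq {n : ℕ} [NeZero n] (q x : TV n) :
    x = q + (((co1 q x : ℕ) : ZMod n), ((co2 q x : ℕ) : ZMod n)) := by
  unfold co1 co2
  rw [ZMod.natCast_val, ZMod.natCast_val, ZMod.cast_id, ZMod.cast_id]
  rw [Prod.ext_iff]
  constructor <;> simp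

lemma val_add_one' {n : ℕ} [NeZero n] (hn : 2 ≤ n) (z : ZMod n) :
    (z + 1).val = (z.val + 1) % n := by
  have h1 : (1 : ZMod n) = ((1:ℕ) : ZMod n) := by push_cast; rfl
  rw [ZMod.val_add, h1, ZMod.val_cast_of_lt (by omega)]

lemma val_sub_one' {n : ℕ} [NeZero n] (hn : 2 ≤ n) (z : ZMod n) :
    (z - 1).val = (z.val + (n-1)) % n := by
  have hmm : ((n-1:ℕ) : ZMod n) = -1 := by
    have hh : ((n-1:ℕ) + 1 : ℕ) = n := by omega
    have h2 : ((n-1:ℕ) : ZMod n) + 1 = 0 := by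
      have h3 : (((n-1:ℕ) + 1 : ℕ) : ZMod n) = ((n:ℕ) : ZMod n) := by rw [hh]
      push_cast at h3
      rw [ZMod.natCast_self] at h3
      exact h3
    linear_combination h2
  have h1 : z - 1 = z + ((n-1 : ℕ) : ZMod n) := by rw [hmm]; ring
  rw [h1, ZMod.val_add, ZMod.val_cast_of_lt (by omega)]

lemma co_shift_addx {n : ℕ} [NeZero n] (hn : 2 ≤ n) (q v : TV n) :
    co1 q (v + (1,0)) = (co1 q v + 1) % n ∧ co2 q (v + (1,0)) = co2 q v := by
  have he : v + (1,0) - q = (v - q) + (1, 0) := by ring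
  unfold co1 co2
  rw [he]
  constructor
  · show ((v - q).1 + 1).val = _
    exact val_add_one' hn _
  · show ((v - q).2 + 0).val = _
    rw [add_zero]

lemma co_shift_subx {n : ℕ} [NeZero n] (hn : 2 ≤ n) (q v : TV n) :
    co1 q (v - (1,0)) = (co1 q v + (n-1)) % n ∧ co2 q (v - (1,0)) = co2 q v := by
  have he : v - (1,0) - q = (v - q) - (1, 0) := by ring
  unfold co1 co2
  rw [he]
  constructor
  · show ((v - q).1 - 1).val = _
    exact val_sub_one' hn _
  · show ((v - q).2 - 0).val = _
    rw [sub_zero]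

lemma co_shift_addy {n : ℕ} [NeZero n] (hn : 2 ≤ n) (q v : TV n) :
    co1 q (v + (0,1)) = co1 q v ∧ co2 q (v + (0,1)) = (co2 q v + 1) % n := by
  have he : v + (0,1) - q = (v - q) + (0, 1) := by ring
  unfold co1 co2
  rw [he]
  constructor
  · show ((v - q).1 + 0).val = _
    rw [add_zero]
  · show ((v - q).2 + 1).val = _
    exact val_add_one' hn _

lemma co_shift_suby {n : ℕ} [NeZero n] (hn : 2 ≤ n) (q v : TV n) :
    co1 q (v - (0,1)) = co1 q v ∧ co2 q (v - (0,1)) = (co2 q v + (n-1)) % n := by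
  have he : v - (0,1) - q = (v - q) - (0, 1) := by ring
  unfold co1 co2
  rw [he]
  constructor
  · show ((v - q).1 - 0).val = _
    rw [sub_zero]
  · show ((v - q).2 - 1).val = _
    exact val_sub_one' hn _

lemma succ_mod_cases {n r : ℕ} (h : r < n) :
    ((r+1) % n = r+1 ∧ r+1 < n) ∨ ((r+1) % n = 0 ∧ r+1 = n) := by
  rcases Nat.lt_or_ge (r+1) n with h' | h'
  · exact Or.inl ⟨Nat.mod_eq_of_lt h', h'⟩
  · have he : r + 1 = n := by omega
    refine Or.inr ⟨?_, he⟩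
    rw [he, Nat.mod_self]

lemma pred_mod_cases {n r : ℕ} (hn0 : 2 ≤ n) (h : r < n) :
    ((r + (n-1)) % n = r - 1 ∧ 0 < r) ∨ ((r + (n-1)) % n = n-1 ∧ r = 0) := by
  rcases Nat.eq_zero_or_pos r with h0 | h0
  · right
    subst h0
    rw [zero_add, Nat.mod_eq_of_lt (by omega)]
    exact ⟨rfl, rfl⟩
  · left
    have he : r + (n-1) = (r-1) + n := by omega
    rw [he, Nat.add_mod_right, Nat.mod_eq_of_lt (by omega)]
    exact ⟨rfl, h0⟩

/-! ### The blocking wall -/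

lemma closedW_x {n k i : ℕ} [NeZero n] (hk : 1 ≤ k) (hn : 4*k+1 ≤ n) (hi : i < k) (q : TV n) :
    Closed (torus n)
      ({x | (co1 q x = 2*i ∨ co1 q x = 2*i+1) ∧ co2 q x ≤ 4*k-2} ∪
       {x | ¬(co1 q x ≤ 4*k-2 ∧ co2 q x ≤ 4*k-2)})ᶜ := by
  have hn2 : 2 ≤ n := by omega
  intro v u1 u2 hne hadj1 hadj2 hu1 hu2
  by_contra hvc
  rw [Set.notMem_compl_iff] at hvc
  have hvW : ((co1 q v = 2*i ∨ co1 q v = 2*i+1) ∧ co2 q v ≤ 4*k-2) ∨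
      ¬(co1 q v ≤ 4*k-2 ∧ co2 q v ≤ 4*k-2) := hvc
  have extract : ∀ u, u ∈ ({x | (co1 q x = 2*i ∨ co1 q x = 2*i+1) ∧ co2 q x ≤ 4*k-2} ∪
       {x | ¬(co1 q x ≤ 4*k-2 ∧ co2 q x ≤ 4*k-2)} : Set (TV n))ᶜ →
      co1 q u ≤ 4*k-2 ∧ co2 q u ≤ 4*k-2 ∧ co1 q u ≠ 2*i ∧ co1 q u ≠ 2*i+1 := by
    intro u hu
    have hA : ¬ ((co1 q u = 2*i ∨ co1 q u = 2*i+1) ∧ co2 q u ≤ 4*k-2) :=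
      fun hh => hu (Set.mem_union_left _ hh)
    have hB : co1 q u ≤ 4*k-2 ∧ co2 q u ≤ 4*k-2 := by
      by_contra hh; exact hu (Set.mem_union_right _ hh)
    exact ⟨hB.1, hB.2, fun he => hA ⟨Or.inl he, hB.2⟩, fun he => hA ⟨Or.inr he, hB.2⟩⟩
  have hu1' := extract u1 hu1
  have hu2' := extract u2 hu2
  clear extract hu1 hu2 hvc
  have hv1n := co1_lt q v
  have hv2n := co2_lt q v
  have key : ∀ u, (torus n).Adj v u →
      (co1 q u ≤ 4*k-2 ∧ co2 q u ≤ 4*k-2 ∧ co1 q u ≠ 2*i ∧ co1 q u ≠ 2*i+1) →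
      (u = v + (1,0) ∧ ((co1 q v = 2*i+1 ∨ co1 q v = n-1) ∧ co2 q v ≤ 4*k-2)) ∨
      (u = v - (1,0) ∧ (((co1 q v = 2*i ∧ 0 < i) ∨ co1 q v = 4*k-1) ∧ co2 q v ≤ 4*k-2)) ∨
      (u = v + (0,1) ∧ (co2 q v = n-1 ∧ co1 q v ≤ 4*k-2)) ∨
      (u = v - (0,1) ∧ (co2 q v = 4*k-1 ∧ co1 q v ≤ 4*k-2)) := by
    intro u hadj hu
    obtain ⟨hux, huy, hne1, hne2⟩ := hu
    rcases (torus_adj_iff hn2 v u).1 hadj with hd | hd | hd | hd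
    · obtain ⟨hc1, hc2⟩ := co_shift_addx hn2 q v
      rw [← hd] at hc1 hc2
      rcases succ_mod_cases hv1n with ⟨hm, hmlt⟩ | ⟨hm, hmeq⟩ <;>
        rw [hm] at hc1 <;> exact Or.inl ⟨hd, by omega⟩
    · obtain ⟨hc1, hc2⟩ := co_shift_subx hn2 q v
      rw [← hd] at hc1 hc2
      rcases pred_mod_cases hn2 hv1n with ⟨hm, hmlt⟩ | ⟨hm, hmeq⟩ <;>
        rw [hm] at hc1 <;> exact Or.inr (Or.inl ⟨hd, by omega⟩)
    · obtain ⟨hc1, hc2⟩ := co_shift_addy hn2 q v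
      rw [← hd] at hc1 hc2
      rcases succ_mod_cases hv2n with ⟨hm, hmlt⟩ | ⟨hm, hmeq⟩ <;>
        rw [hm] at hc2 <;> exact Or.inr (Or.inr (Or.inl ⟨hd, by omega⟩))
    · obtain ⟨hc1, hc2⟩ := co_shift_suby hn2 q v
      rw [← hd] at hc1 hc2
      rcases pred_mod_cases hn2 hv2n with ⟨hm, hmlt⟩ | ⟨hm, hmeq⟩ <;>
        rw [hm] at hc2 <;> exact Or.inr (Or.inr (Or.inr ⟨hd, by omega⟩))
  rcases key u1 hadj1 hu1' with ⟨he1, hx1⟩ | ⟨he1, hx1⟩ | ⟨he1, hx1⟩ | ⟨he1, hx1⟩ <;>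
    rcases key u2 hadj2 hu2' with ⟨he2, hx2⟩ | ⟨he2, hx2⟩ | ⟨he2, hx2⟩ | ⟨he2, hx2⟩ <;>
    first
      | exact hne (he1.trans he2.symm)
      | omega

lemma closedW_y {n k i : ℕ} [NeZero n] (hk : 1 ≤ k) (hn : 4*k+1 ≤ n) (hi : i < k) (q : TV n) :
    Closed (torus n)
      ({x | (co2 q x = 2*i ∨ co2 q x = 2*i+1) ∧ co1 q x ≤ 4*k-2} ∪
       {x | ¬(co1 q x ≤ 4*k-2 ∧ co2 q x ≤ 4*k-2)})ᶜ := by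
  have hn2 : 2 ≤ n := by omega
  intro v u1 u2 hne hadj1 hadj2 hu1 hu2
  by_contra hvc
  rw [Set.notMem_compl_iff] at hvc
  have hvW : ((co2 q v = 2*i ∨ co2 q v = 2*i+1) ∧ co1 q v ≤ 4*k-2) ∨
      ¬(co1 q v ≤ 4*k-2 ∧ co2 q v ≤ 4*k-2) := hvc
  have extract : ∀ u, u ∈ ({x | (co2 q x = 2*i ∨ co2 q x = 2*i+1) ∧ co1 q x ≤ 4*k-2} ∪
       {x | ¬(co1 q x ≤ 4*k-2 ∧ co2 q x ≤ 4*k-2)} : Set (TV n))ᶜ →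
      co1 q u ≤ 4*k-2 ∧ co2 q u ≤ 4*k-2 ∧ co2 q u ≠ 2*i ∧ co2 q u ≠ 2*i+1 := by
    intro u hu
    have hA : ¬ ((co2 q u = 2*i ∨ co2 q u = 2*i+1) ∧ co1 q u ≤ 4*k-2) :=
      fun hh => hu (Set.mem_union_left _ hh)
    have hB : co1 q u ≤ 4*k-2 ∧ co2 q u ≤ 4*k-2 := by
      by_contra hh; exact hu (Set.mem_union_right _ hh)
    exact ⟨hB.1, hB.2, fun he => hA ⟨Or.inl he, hB.1⟩, fun he => hA ⟨Or.inr he, hB.1⟩⟩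
  have hu1' := extract u1 hu1
  have hu2' := extract u2 hu2
  clear extract hu1 hu2 hvc
  have hv1n := co1_lt q v
  have hv2n := co2_lt q v
  have key : ∀ u, (torus n).Adj v u →
      (co1 q u ≤ 4*k-2 ∧ co2 q u ≤ 4*k-2 ∧ co2 q u ≠ 2*i ∧ co2 q u ≠ 2*i+1) →
      (u = v + (0,1) ∧ ((co2 q v = 2*i+1 ∨ co2 q v = n-1) ∧ co1 q v ≤ 4*k-2)) ∨
      (u = v - (0,1) ∧ (((co2 q v = 2*i ∧ 0 < i) ∨ co2 q v = 4*k-1) ∧ co1 q v ≤ 4*k-2)) ∨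
      (u = v + (1,0) ∧ (co1 q v = n-1 ∧ co2 q v ≤ 4*k-2)) ∨
      (u = v - (1,0) ∧ (co1 q v = 4*k-1 ∧ co2 q v ≤ 4*k-2)) := by
    intro u hadj hu
    obtain ⟨hux, huy, hne1, hne2⟩ := hu
    rcases (torus_adj_iff hn2 v u).1 hadj with hd | hd | hd | hd
    · obtain ⟨hc1, hc2⟩ := co_shift_addx hn2 q v
      rw [← hd] at hc1 hc2
      rcases succ_mod_cases hv1n with ⟨hm, hmlt⟩ | ⟨hm, hmeq⟩ <;>
        rw [hm] at hc1 <;> exact Or.inr (Or.inr (Or.inl ⟨hd, by omega⟩))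
    · obtain ⟨hc1, hc2⟩ := co_shift_subx hn2 q v
      rw [← hd] at hc1 hc2
      rcases pred_mod_cases hn2 hv1n with ⟨hm, hmlt⟩ | ⟨hm, hmeq⟩ <;>
        rw [hm] at hc1 <;> exact Or.inr (Or.inr (Or.inr ⟨hd, by omega⟩))
    · obtain ⟨hc1, hc2⟩ := co_shift_addy hn2 q v
      rw [← hd] at hc1 hc2
      rcases succ_mod_cases hv2n with ⟨hm, hmlt⟩ | ⟨hm, hmeq⟩ <;>
        rw [hm] at hc2 <;> exact Or.inl ⟨hd, by omega⟩
    · obtain ⟨hc1, hc2⟩ := co_shift_suby hn2 q v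
      rw [← hd] at hc1 hc2
      rcases pred_mod_cases hn2 hv2n with ⟨hm, hmlt⟩ | ⟨hm, hmeq⟩ <;>
        rw [hm] at hc2 <;> exact Or.inr (Or.inl ⟨hd, by omega⟩)
  rcases key u1 hadj1 hu1' with ⟨he1, hx1⟩ | ⟨he1, hx1⟩ | ⟨he1, hx1⟩ | ⟨he1, hx1⟩ <;>
    rcases key u2 hadj2 hu2' with ⟨he2, hx2⟩ | ⟨he2, hx2⟩ | ⟨he2, hx2⟩ | ⟨he2, hx2⟩ <;>
    first
      | exact hne (he1.trans he2.symm)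
      | omega

lemma column_seed_x {n k : ℕ} [NeZero n] (hk : 1 ≤ k) (hn : 4*k+1 ≤ n)
    {S C : Set (TV n)} (q : TV n)
    (hCR : ∀ x ∈ C, co1 q x ≤ 4*k-2 ∧ co2 q x ≤ 4*k-2)
    (hspan : C ⊆ cl (torus n) (S ∩ C))
    {i : ℕ} (hi : i < k) {w : TV n} (hw : w ∈ C) (hcol : co1 q w = 2*i) :
    ∃ ε, ε ≤ 1 ∧ ∃ t, t ≤ 4*k-2 ∧
      q + (((2*i+ε : ℕ) : ZMod n), ((t : ℕ) : ZMod n)) ∈ S := by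
  by_contra hno
  push_neg at hno
  have hclosed := closedW_x (n := n) hk hn hi q
  have hsub : S ∩ C ⊆ ({x | (co1 q x = 2*i ∨ co1 q x = 2*i+1) ∧ co2 q x ≤ 4*k-2} ∪
       {x | ¬(co1 q x ≤ 4*k-2 ∧ co2 q x ≤ 4*k-2)} : Set (TV n))ᶜ := by
    rintro z ⟨hzS, hzC⟩
    obtain ⟨hz1, hz2⟩ := hCR z hzC
    intro hzW
    rcases hzW with ⟨hcolz, -⟩ | hout
    · rcases hcolz with hcz | hcz
      · refine hno 0 (by omega) (co2 q z) hz2 ?_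
        have h1 : ((2*i+0 : ℕ) : ZMod n) = ((co1 q z : ℕ) : ZMod n) := by
          rw [show 2*i+0 = co1 q z by omega]
        rw [h1, ← point_eq q z]
        exact hzS
      · refine hno 1 le_rfl (co2 q z) hz2 ?_
        have h1 : ((2*i+1 : ℕ) : ZMod n) = ((co1 q z : ℕ) : ZMod n) := by
          rw [show 2*i+1 = co1 q z by omega]
        rw [h1, ← point_eq q z]
        exact hzS
    · exact hout ⟨hz1, hz2⟩
  have hcl2 := cl_subset hsub hclosed
  exact (hcl2 (hspan hw)) (Set.mem_union_left _ ⟨Or.inl hcol, (hCR w hw).2⟩)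

lemma column_seed_y {n k : ℕ} [NeZero n] (hk : 1 ≤ k) (hn : 4*k+1 ≤ n)
    {S C : Set (TV n)} (q : TV n)
    (hCR : ∀ x ∈ C, co1 q x ≤ 4*k-2 ∧ co2 q x ≤ 4*k-2)
    (hspan : C ⊆ cl (torus n) (S ∩ C))
    {i : ℕ} (hi : i < k) {w : TV n} (hw : w ∈ C) (hcol : co2 q w = 2*i) :
    ∃ ε, ε ≤ 1 ∧ ∃ t, t ≤ 4*k-2 ∧
      q + (((t : ℕ) : ZMod n), ((2*i+ε : ℕ) : ZMod n)) ∈ S := by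
  by_contra hno
  push_neg at hno
  have hclosed := closedW_y (n := n) hk hn hi q
  have hsub : S ∩ C ⊆ ({x | (co2 q x = 2*i ∨ co2 q x = 2*i+1) ∧ co1 q x ≤ 4*k-2} ∪
       {x | ¬(co1 q x ≤ 4*k-2 ∧ co2 q x ≤ 4*k-2)} : Set (TV n))ᶜ := by
    rintro z ⟨hzS, hzC⟩
    obtain ⟨hz1, hz2⟩ := hCR z hzC
    intro hzW
    rcases hzW with ⟨hcolz, -⟩ | hout
    · rcases hcolz with hcz | hcz
      · refine hno 0 (by omega) (co1 q z) hz1 ?_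
        have h1 : ((2*i+0 : ℕ) : ZMod n) = ((co2 q z : ℕ) : ZMod n) := by
          rw [show 2*i+0 = co2 q z by omega]
        rw [h1, ← point_eq q z]
        exact hzS
      · refine hno 1 le_rfl (co1 q z) hz1 ?_
        have h1 : ((2*i+1 : ℕ) : ZMod n) = ((co2 q z : ℕ) : ZMod n) := by
          rw [show 2*i+1 = co2 q z by omega]
        rw [h1, ← point_eq q z]
        exact hzS
    · exact hout ⟨hz1, hz2⟩
  have hcl2 := cl_subset hsub hclosed
  exact (hcl2 (hspan hw)) (Set.mem_union_left _ ⟨Or.inl hcol, (hCR w hw).1⟩)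

/-! ### The cluster invariant -/

def ConnIn {n : ℕ} (C : Set (TV n)) : Prop := ∀ u ∈ C, ∀ w ∈ C, ReachIn (torus n) C u w

def GoodC {n : ℕ} (S C : Set (TV n)) : Prop :=
  C.Nonempty ∧ ConnIn C ∧ C ⊆ cl (torus n) (S ∩ C)

def Big (n k : ℕ) (S : Set (TV n)) : Prop :=
  ∃ C v, GoodC S C ∧ C ⊆ ball v (2*(k:ℤ)-1) ∧ ¬∃ c, C ⊆ ball c ((k:ℤ)-1)

def SmallCover (n k : ℕ) (S F : Set (TV n)) : Prop :=
  ∃ 𝒞 : Set (Set (TV n)), ⋃₀ 𝒞 = F ∧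
    (∀ C ∈ 𝒞, GoodC S C ∧ ∃ c, C ⊆ ball c ((k:ℤ)-1)) ∧
    (∀ C ∈ 𝒞, ∀ C' ∈ 𝒞, C ≠ C' → ∀ a ∈ C, ∀ b ∈ C', ¬ (torus n).Adj a b)

lemma smallcover_step {n k : ℕ} (hn : 2 ≤ n) (hk : 1 ≤ k) {S F : Set (TV n)}
    (h : SmallCover n k S F) (v : TV n)
    (hv : v ∈ S ∨ ∃ u w, u ≠ w ∧ (torus n).Adj v u ∧ (torus n).Adj v w ∧ u ∈ F ∧ w ∈ F) :
    Big n k S ∨ SmallCover n k S (insert v F) := by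
  obtain ⟨𝒞, hU, hgood, hpair⟩ := h
  classical
  have hki : (1:ℤ) ≤ (k:ℤ) := by exact_mod_cast hk
  set T : Set (Set (TV n)) := {C | C ∈ 𝒞 ∧ ∃ a ∈ C, (torus n).Adj v a} with hT
  set Cv : Set (TV n) := insert v (⋃₀ T) with hCvdef
  have hvCv : v ∈ Cv := Set.mem_insert _ _
  have hsubCv : ∀ C ∈ T, C ⊆ Cv := fun C hC x hx => Set.mem_insert_of_mem _ ⟨C, hC, hx⟩
  have hCvF : Cv ⊆ insert v F := by
    intro x hx
    rcases Set.mem_insert_iff.1 hx with rfl | hx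
    · exact Set.mem_insert _ _
    · obtain ⟨C, hCT, hxC⟩ := hx
      exact Set.mem_insert_of_mem _ (hU ▸ ⟨C, hCT.1, hxC⟩)
  have reach_v : ∀ u ∈ Cv, ReachIn (torus n) Cv v u := by
    intro u hu
    rcases Set.mem_insert_iff.1 hu with rfl | hu
    · exact .refl hvCv
    · obtain ⟨C, hCT, huC⟩ := hu
      obtain ⟨a, haC, hav⟩ := hCT.2
      have h1 : ReachIn (torus n) Cv v a := .tail (.refl hvCv) hav (hsubCv C hCT haC)
      have hconn := (hgood C hCT.1).1.2.1
      exact h1.trans ((hconn a haC u huC).mono (hsubCv C hCT))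
  have hconnCv : ConnIn Cv := fun u hu w hw => (reach_v u hu).symm.trans (reach_v w hw)
  have hsub1 : ∀ C ∈ T, C ⊆ cl (torus n) (S ∩ Cv) := by
    intro C hC
    refine ((hgood C hC.1).1.2.2).trans (cl_mono ?_)
    exact Set.inter_subset_inter_right _ (hsubCv C hC)
  have hspanCv : Cv ⊆ cl (torus n) (S ∩ Cv) := by
    intro x hx
    rcases Set.mem_insert_iff.1 hx with rfl | hx
    · rcases hv with hvS | ⟨u, w, huw, hadju, hadjw, huF, hwF⟩
      · exact subset_cl ⟨hvS, hvCv⟩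
      · have hmem : ∀ z, z ∈ F → (torus n).Adj x z → z ∈ cl (torus n) (S ∩ Cv) := by
          intro z hzF hadj
          rw [← hU] at hzF
          obtain ⟨C, hC𝒞, hzC⟩ := hzF
          exact hsub1 C ⟨hC𝒞, z, hzC, hadj⟩ hzC
        exact closed_cl x u w huw hadju hadjw (hmem u huF hadju) (hmem w hwF hadjw)
    · obtain ⟨C, hCT, hxC⟩ := hx
      exact hsub1 C hCT hxC
  have hballCv : Cv ⊆ ball v (2*(k:ℤ)-1) := by
    intro x hx
    rcases Set.mem_insert_iff.1 hx with rfl | hx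
    · exact self_mem_ball _ (by omega)
    · obtain ⟨C, hCT, hxC⟩ := hx
      obtain ⟨c, hball⟩ := (hgood C hCT.1).2
      obtain ⟨a, haC, hav⟩ := hCT.2
      have h2 := ball_merge hball haC (adj_mem_ball hn hav)
      have he : 2*((k:ℤ)-1)+1 = 2*(k:ℤ)-1 := by ring
      rw [he] at h2
      exact h2 hxC
  by_cases hsmall : ∃ c, Cv ⊆ ball c ((k:ℤ)-1)
  · right
    refine ⟨insert Cv {C | C ∈ 𝒞 ∧ C ∉ T}, ?_, ?_, ?_⟩
    · apply Set.Subset.antisymm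
      · intro x hx
        obtain ⟨C, hC, hxC⟩ := hx
        rcases Set.mem_insert_iff.1 hC with rfl | hC
        · exact hCvF hxC
        · exact Set.mem_insert_of_mem _ (hU ▸ ⟨C, hC.1, hxC⟩)
      · intro x hx
        rcases Set.mem_insert_iff.1 hx with rfl | hx
        · exact ⟨Cv, Set.mem_insert _ _, hvCv⟩
        · rw [← hU] at hx
          obtain ⟨C, hC, hxC⟩ := hx
          by_cases hCT : C ∈ T
          · exact ⟨Cv, Set.mem_insert _ _, hsubCv C hCT hxC⟩
          · exact ⟨C, Set.mem_insert_of_mem _ ⟨hC, hCT⟩, hxC⟩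
    · intro C hC
      rcases Set.mem_insert_iff.1 hC with rfl | hC
      · exact ⟨⟨⟨v, hvCv⟩, hconnCv, hspanCv⟩, hsmall⟩
      · exact hgood C hC.1
    · have hnew : ∀ C' ∈ 𝒞, C' ∉ T → ∀ a ∈ Cv, ∀ b ∈ C', ¬ (torus n).Adj a b := by
        intro C' hC' hC'T a ha b hb hadj
        rcases Set.mem_insert_iff.1 ha with rfl | ha
        · exact hC'T ⟨hC', b, hb, hadj⟩
        · obtain ⟨C, hCT, haC⟩ := ha
          have hCC' : C ≠ C' := fun he => hC'T (he ▸ hCT)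
          exact hpair C hCT.1 C' hC' hCC' a haC b hb hadj
      intro C1 hC1 C2 hC2 hne a ha b hb
      rcases Set.mem_insert_iff.1 hC1 with rfl | hC1
      · rcases Set.mem_insert_iff.1 hC2 with he2 | hC2
        · exact absurd he2.symm hne
        · exact hnew C2 hC2.1 hC2.2 a ha b hb
      · rcases Set.mem_insert_iff.1 hC2 with rfl | hC2
        · intro hadj
          exact hnew C1 hC1.1 hC1.2 b hb a ha hadj.symm
        · exact hpair C1 hC1.1 C2 hC2.1 hne a ha b hb
  · left
    exact ⟨Cv, v, ⟨⟨v, hvCv⟩, hconnCv, hspanCv⟩, hballCv, hsmall⟩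

lemma inv_univ {n k : ℕ} [NeZero n] (hn : 2 ≤ n) (hk : 1 ≤ k) {S : Set (TV n)}
    (hcl : cl (torus n) S = Set.univ) :
    Big n k S ∨ SmallCover n k S Set.univ := by
  have h := cl_induction (G := torus n) (A := S)
      (P := fun F => Big n k S ∨ SmallCover n k S F)
      (Or.inr ⟨∅, by simp, by simp, by simp⟩)
      (fun F v hP hvS => hP.elim Or.inl (fun hsc => smallcover_step hn hk hsc v (Or.inl hvS)))
      (fun F v hP hex => hP.elim Or.inl (fun hsc => smallcover_step hn hk hsc v (Or.inr hex)))
  rwa [hcl] at h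

lemma no_smallcover_univ {n k : ℕ} [NeZero n] (hk : 1 ≤ k) (hn : 3*k+1 ≤ n)
    {S : Set (TV n)} : ¬ SmallCover n k S Set.univ := by
  rintro ⟨𝒞, hU, hgood, hpair⟩
  have hn2 : 2 ≤ n := by omega
  have h0 : (0 : TV n) ∈ ⋃₀ 𝒞 := by rw [hU]; trivial
  obtain ⟨C1, hC1, h0C⟩ := h0
  obtain ⟨-, c, hball⟩ := hgood C1 hC1
  have hki : (1:ℤ) ≤ (k:ℤ) := by exact_mod_cast hk
  have hnz : 3*(k:ℤ)+1 ≤ (n:ℤ) := by exact_mod_cast hn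
  have hout : c + (((2*k:ℕ) : ZMod n), (((0:ℕ)) : ZMod n)) ∉ C1 := by
    intro hmem
    obtain ⟨d1, d2, hd1, hd2, heq⟩ := hball hmem
    have h2 : (((2*k:ℕ):ZMod n), ((0:ℕ):ZMod n))
        = (((d1:ℤ):ZMod n), ((d2:ℤ):ZMod n)) := add_left_cancel heq
    have h1 := congrArg Prod.fst h2
    have h3 : (((2*k:ℕ):ℤ) : ZMod n) = ((d1:ℤ) : ZMod n) := by exact_mod_cast h1
    have hdvd : (n:ℤ) ∣ d1 - ((2*k:ℕ):ℤ) :=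
      Int.ModEq.dvd ((ZMod.intCast_eq_intCast_iff _ _ _).1 h3)
    have hkk : ((2*k:ℕ):ℤ) = 2*(k:ℤ) := by push_cast; ring
    rw [abs_le] at hd1
    have h5 : d1 - ((2*k:ℕ):ℤ) = 0 := my_dvd_zero hdvd (by rw [abs_lt]; omega)
    omega
  obtain ⟨p⟩ := torus_reachable hn2 (0 : TV n) (c + (((2*k:ℕ) : ZMod n), ((0:ℕ) : ZMod n)))
  obtain ⟨a, b, hab, haA, hbA⟩ := exists_boundary_edge p h0C hout
  have hbU : b ∈ ⋃₀ 𝒞 := by rw [hU]; trivial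
  obtain ⟨C2, hC2, hbC2⟩ := hbU
  exact hpair C1 hC1 C2 hC2 (fun he => hbA (he ▸ hbC2)) a haA b hbC2 hab

/-! ### Extraction of the seed pattern -/

def cellOff (n : ℕ) (o : Bool) (s t : ℕ) : TV n :=
  if o then ((s : ZMod n), (t : ZMod n)) else ((t : ZMod n), (s : ZMod n))

def SeedEvent (n k : ℕ) (S : Set (TV n)) : Prop :=
  ∃ (q : TV n) (o : Bool), ∀ i < k, ∃ ε, ε ≤ 1 ∧ ∃ t, t ≤ 4*k-2 ∧
    q + cellOff n o (2*i+ε) t ∈ S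

lemma big_to_event {n k : ℕ} [NeZero n] (hk : 1 ≤ k) (hn : 4*k+1 ≤ n) {S : Set (TV n)}
    (hbig : Big n k S) : SeedEvent n k S := by
  classical
  obtain ⟨C, v, ⟨hCne, hconn, hspan⟩, hball, hnotsmall⟩ := hbig
  have hn2 : 2 ≤ n := by omega
  have hn4 : 4*k ≤ n := by omega
  have hki : (1:ℤ) ≤ (k:ℤ) := by exact_mod_cast hk
  have hnz : 4*(k:ℤ)+1 ≤ (n:ℤ) := by exact_mod_cast hn
  set g1 : TV n → ℤ := fun w => crep k ((w - v).1) with hg1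
  set g2 : TV n → ℤ := fun w => crep k ((w - v).2) with hg2
  have hgspec : ∀ w ∈ C, |g1 w| ≤ 2*(k:ℤ)-1 ∧ |g2 w| ≤ 2*(k:ℤ)-1 ∧
      w = v + (((g1 w : ℤ) : ZMod n), ((g2 w : ℤ) : ZMod n)) := by
    intro w hw
    obtain ⟨d1, d2, hd1, hd2, he⟩ := hball hw
    have he0 : w - v = (((d1:ℤ):ZMod n), ((d2:ℤ):ZMod n)) := by rw [he]; ring
    have hc1 : (w - v).1 = ((d1:ℤ) : ZMod n) := congrArg Prod.fst he0
    have hc2 : (w - v).2 = ((d2:ℤ) : ZMod n) := congrArg Prod.snd he0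
    have hh1 : g1 w = d1 := crep_spec hn4 hd1 hc1
    have hh2 : g2 w = d2 := crep_spec hn4 hd2 hc2
    rw [hh1, hh2]
    exact ⟨hd1, hd2, he⟩
  have hco : ∀ a b, a ∈ C → b ∈ C → (torus n).Adj a b →
      |g1 b - g1 a| ≤ 1 ∧ |g2 b - g2 a| ≤ 1 := by
    intro a b ha hb hadj
    obtain ⟨ha1, ha2, hea⟩ := hgspec a ha
    obtain ⟨hb1, hb2, heb⟩ := hgspec b hb
    obtain ⟨δ1, δ2, hδ1, hδ2, he⟩ := adj_mem_ball hn2 hadj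
    have key : g1 b = g1 a + δ1 ∧ g2 b = g2 a + δ2 := by
      have e0 : b - v = (a - v) + ((δ1 : ZMod n), (δ2 : ZMod n)) := by rw [he]; ring
      constructor
      · have hc1 : ((g1 b : ℤ) : ZMod n) = ((g1 a + δ1 : ℤ) : ZMod n) := by
          have e1 : (b - v).1 = (a - v).1 + ((δ1:ℤ) : ZMod n) := congrArg Prod.fst e0
          have e2 : ((g1 b : ℤ) : ZMod n) = (b - v).1 := crep_cast k _
          have e3 : ((g1 a : ℤ) : ZMod n) = (a - v).1 := crep_cast k _
          rw [e2, e1, ← e3]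
          push_cast
          ring
        refine cast_inj_small (B := 2*(k:ℤ)) ?_ ?_ ?_ hc1
        · rw [abs_le] at *; omega
        · rw [abs_le] at *; omega
        · omega
      · have hc1 : ((g2 b : ℤ) : ZMod n) = ((g2 a + δ2 : ℤ) : ZMod n) := by
          have e1 : (b - v).2 = (a - v).2 + ((δ2:ℤ) : ZMod n) := congrArg Prod.snd e0
          have e2 : ((g2 b : ℤ) : ZMod n) = (b - v).2 := crep_cast k _
          have e3 : ((g2 a : ℤ) : ZMod n) = (a - v).2 := crep_cast k _
          rw [e2, e1, ← e3]
          push_cast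
          ring
        refine cast_inj_small (B := 2*(k:ℤ)) ?_ ?_ ?_ hc1
        · rw [abs_le] at *; omega
        · rw [abs_le] at *; omega
        · omega
    constructor
    · rw [key.1, add_sub_cancel_left]; exact hδ1
    · rw [key.2, add_sub_cancel_left]; exact hδ2
  obtain ⟨w0, hw0⟩ := hCne
  set Ft : Finset (TV n) := (Set.toFinite C).toFinset with hFtdef
  have hFt : ∀ x, x ∈ Ft ↔ x ∈ C := by
    intro x
    rw [hFtdef]
    exact Set.Finite.mem_toFinset _
  have hFn1 : (Ft.image g1).Nonempty :=
    ⟨g1 w0, Finset.mem_image_of_mem _ ((hFt w0).2 hw0)⟩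
  have hFn2 : (Ft.image g2).Nonempty :=
    ⟨g2 w0, Finset.mem_image_of_mem _ ((hFt w0).2 hw0)⟩
  set x0 : ℤ := (Ft.image g1).min' hFn1 with hx0def
  set x1 : ℤ := (Ft.image g1).max' hFn1 with hx1def
  set y0 : ℤ := (Ft.image g2).min' hFn2 with hy0def
  set y1 : ℤ := (Ft.image g2).max' hFn2 with hy1def
  have hbounds : ∀ w ∈ C, x0 ≤ g1 w ∧ g1 w ≤ x1 ∧ y0 ≤ g2 w ∧ g2 w ≤ y1 := by
    intro w hw
    have hmem1 : g1 w ∈ Ft.image g1 := Finset.mem_image_of_mem _ ((hFt w).2 hw)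
    have hmem2 : g2 w ∈ Ft.image g2 := Finset.mem_image_of_mem _ ((hFt w).2 hw)
    exact ⟨Finset.min'_le _ _ hmem1, Finset.le_max' _ _ hmem1,
      Finset.min'_le _ _ hmem2, Finset.le_max' _ _ hmem2⟩
  have hattain1 : ∃ w ∈ C, g1 w = x0 := by
    obtain ⟨w, hwFt, he⟩ := Finset.mem_image.1 ((Ft.image g1).min'_mem hFn1)
    exact ⟨w, (hFt w).1 hwFt, he⟩
  have hattain2 : ∃ w ∈ C, g1 w = x1 := by
    obtain ⟨w, hwFt, he⟩ := Finset.mem_image.1 ((Ft.image g1).max'_mem hFn1)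
    exact ⟨w, (hFt w).1 hwFt, he⟩
  have hattain3 : ∃ w ∈ C, g2 w = y0 := by
    obtain ⟨w, hwFt, he⟩ := Finset.mem_image.1 ((Ft.image g2).min'_mem hFn2)
    exact ⟨w, (hFt w).1 hwFt, he⟩
  have hattain4 : ∃ w ∈ C, g2 w = y1 := by
    obtain ⟨w, hwFt, he⟩ := Finset.mem_image.1 ((Ft.image g2).max'_mem hFn2)
    exact ⟨w, (hFt w).1 hwFt, he⟩
  have hx0B : -(2*(k:ℤ)-1) ≤ x0 := by
    obtain ⟨w, hw, he⟩ := hattain1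
    have := (hgspec w hw).1
    rw [abs_le] at this
    omega
  have hx1B : x1 ≤ 2*(k:ℤ)-1 := by
    obtain ⟨w, hw, he⟩ := hattain2
    have := (hgspec w hw).1
    rw [abs_le] at this
    omega
  have hy0B : -(2*(k:ℤ)-1) ≤ y0 := by
    obtain ⟨w, hw, he⟩ := hattain3
    have := (hgspec w hw).2.1
    rw [abs_le] at this
    omega
  have hy1B : y1 ≤ 2*(k:ℤ)-1 := by
    obtain ⟨w, hw, he⟩ := hattain4
    have := (hgspec w hw).2.1
    rw [abs_le] at this
    omega
  have hspread : 2*(k:ℤ)-1 ≤ x1 - x0 ∨ 2*(k:ℤ)-1 ≤ y1 - y0 := by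
    by_contra hcon
    push_neg at hcon
    apply hnotsmall
    refine ⟨v + (((x0 + ((k:ℤ)-1) : ℤ) : ZMod n), ((y0 + ((k:ℤ)-1) : ℤ) : ZMod n)), ?_⟩
    intro w hw
    obtain ⟨h1, h2, he⟩ := hgspec w hw
    obtain ⟨hb1, hb2, hb3, hb4⟩ := hbounds w hw
    refine ⟨g1 w - x0 - ((k:ℤ)-1), g2 w - y0 - ((k:ℤ)-1), ?_, ?_, ?_⟩
    · rw [abs_le]; omega
    · rw [abs_le]; omega
    · conv_lhs => rw [he]
      rw [Prod.ext_iff]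
      constructor <;> simp only [Prod.fst_add, Prod.snd_add] <;> push_cast <;> ring
  have h42 : ((4*k-2:ℕ):ℤ) = 4*(k:ℤ)-2 := by
    rw [Nat.cast_sub (by omega : 2 ≤ 4*k)]; push_cast; ring
  set q : TV n := v + ((x0 : ZMod n), (y0 : ZMod n)) with hqdef
  have hcoq : ∀ w ∈ C, (co1 q w : ℤ) = g1 w - x0 ∧ (co2 q w : ℤ) = g2 w - y0 := by
    intro w hw
    obtain ⟨h1, h2, he⟩ := hgspec w hw
    obtain ⟨hb1, hb2, hb3, hb4⟩ := hbounds w hw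
    have e0 : w - q = (((g1 w - x0 : ℤ) : ZMod n), ((g2 w - y0 : ℤ) : ZMod n)) := by
      conv_lhs => rw [he]
      rw [hqdef, Prod.ext_iff]
      constructor <;>
        simp only [Prod.fst_add, Prod.snd_add, Prod.fst_sub, Prod.snd_sub] <;>
        push_cast <;> ring
    rw [abs_le] at h1 h2
    constructor
    · show (((w - q).1).val : ℤ) = g1 w - x0
      rw [congrArg Prod.fst e0]
      exact val_intCast_small (by omega) (by omega)
    · show (((w - q).2).val : ℤ) = g2 w - y0
      rw [congrArg Prod.snd e0]
      exact val_intCast_small (by omega) (by omega)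
  have hCR : ∀ x ∈ C, co1 q x ≤ 4*k-2 ∧ co2 q x ≤ 4*k-2 := by
    intro x hx
    obtain ⟨hc1, hc2⟩ := hcoq x hx
    obtain ⟨h1, h2, -⟩ := hgspec x hx
    obtain ⟨hb1, hb2, hb3, hb4⟩ := hbounds x hx
    rw [abs_le] at h1 h2
    constructor
    · have : (co1 q x : ℤ) ≤ ((4*k-2:ℕ):ℤ) := by rw [h42]; omega
      exact_mod_cast this
    · have : (co2 q x : ℤ) ≤ ((4*k-2:ℕ):ℤ) := by rw [h42]; omega
      exact_mod_cast this
  rcases hspread with hsp | hsp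
  · -- horizontal orientation
    refine ⟨q, true, ?_⟩
    intro i hi
    -- find w ∈ C with g1 w = x0 + 2 i
    obtain ⟨wa, hwa, hea⟩ := hattain1
    obtain ⟨wb, hwb, heb⟩ := hattain2
    have hreach : ReachIn (torus n) C wa wb := hconn wa hwa wb hwb
    have hstep : ∀ a b, a ∈ C → b ∈ C → (torus n).Adj a b → |g1 b - g1 a| ≤ 1 :=
      fun a b ha hb hadj => (hco a b ha hb hadj).1
    have hii : (i:ℤ) < (k:ℤ) := by exact_mod_cast hi
    obtain ⟨z, hzC, hz⟩ := hreach.ivt hstep (x0 + 2*i) (by omega) (by rw [heb]; omega)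
    have hcolz : co1 q z = 2*i := by
      have := (hcoq z hzC).1
      rw [hz] at this
      have h2 : (co1 q z : ℤ) = ((2*i : ℕ) : ℤ) := by push_cast; omega
      exact_mod_cast h2
    obtain ⟨ε, hε, t, ht, hseed⟩ := column_seed_x hk hn q hCR hspan hi hzC hcolz
    refine ⟨ε, hε, t, ht, ?_⟩
    have hcell : cellOff n true (2*i+ε) t = (((2*i+ε : ℕ) : ZMod n), ((t : ℕ) : ZMod n)) := by
      simp [cellOff]
    rw [hcell]
    exact hseed
  · -- vertical orientation
    refine ⟨q, false, ?_⟩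
    intro i hi
    obtain ⟨wa, hwa, hea⟩ := hattain3
    obtain ⟨wb, hwb, heb⟩ := hattain4
    have hreach : ReachIn (torus n) C wa wb := hconn wa hwa wb hwb
    have hstep : ∀ a b, a ∈ C → b ∈ C → (torus n).Adj a b → |g2 b - g2 a| ≤ 1 :=
      fun a b ha hb hadj => (hco a b ha hb hadj).2
    have hii : (i:ℤ) < (k:ℤ) := by exact_mod_cast hi
    obtain ⟨z, hzC, hz⟩ := hreach.ivt (g := g2) hstep (y0 + 2*i) (by omega) (by rw [heb]; omega)
    have hcolz : co2 q z = 2*i := by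
      have := (hcoq z hzC).2
      rw [hz] at this
      have h2 : (co2 q z : ℤ) = ((2*i : ℕ) : ℤ) := by push_cast; omega
      exact_mod_cast h2
    obtain ⟨ε, hε, t, ht, hseed⟩ := column_seed_y hk hn q hCR hspan hi hzC hcolz
    refine ⟨ε, hε, t, ht, ?_⟩
    have hcell : cellOff n false (2*i+ε) t = (((t : ℕ) : ZMod n), ((2*i+ε : ℕ) : ZMod n)) := by
      simp [cellOff]
    rw [hcell]
    exact hseed

lemma dynamo_seeds {n k : ℕ} (hk : 1 ≤ k) (hn : 4*k+1 ≤ n) {S : Set (TV n)}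
    (hd : IsDynamo (torus n) S) : SeedEvent n k S := by
  haveI : NeZero n := ⟨by omega⟩
  have hcl : cl (torus n) S = Set.univ := by
    apply Set.eq_univ_of_forall
    intro x
    obtain ⟨t, ht⟩ := hd x
    exact iterate_subset_cl t ht
  rcases inv_univ (by omega) hk hcl with hbig | hsc
  · exact big_to_event hk hn hbig
  · exact absurd hsc (no_smallcover_univ hk (by omega))

/-! ### Probability estimates -/

lemma bernoulli_true {p : ℝ} : bernoulliMeasure p {true} = ENNReal.ofReal p := by
  have ht : MeasurableSet ({true} : Set Bool) := measurableSet_singleton true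
  rw [bernoulliMeasure, Measure.add_apply, Measure.smul_apply, Measure.smul_apply,
    Measure.dirac_apply' _ ht, Measure.dirac_apply' _ ht]
  simp [Set.indicator]

lemma bernoulli_univ {p : ℝ} (hp0 : 0 ≤ p) (hp1 : p ≤ 1) :
    bernoulliMeasure p Set.univ = 1 := by
  have ht : MeasurableSet (Set.univ : Set Bool) := MeasurableSet.univ
  rw [bernoulliMeasure, Measure.add_apply, Measure.smul_apply, Measure.smul_apply,
    Measure.dirac_apply' _ ht, Measure.dirac_apply' _ ht]
  simp only [Set.indicator_univ, Pi.one_apply, smul_eq_mul, mul_one]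
  rw [← ENNReal.ofReal_add hp0 (by linarith)]
  norm_num

lemma cylinder {n : ℕ} [NeZero n] {p : ℝ} (hp0 : 0 ≤ p) (hp1 : p ≤ 1) (T : Finset (TV n)) :
    seedMeasure (TV n) p {f | ∀ v ∈ T, f v = true} = ENNReal.ofReal p ^ T.card := by
  classical
  have hset : {f : TV n → Bool | ∀ v ∈ T, f v = true}
      = Set.pi Set.univ (fun v => if v ∈ T then {true} else Set.univ) := by
    ext f
    simp only [Set.mem_setOf_eq, Set.mem_pi, Set.mem_univ, true_implies]
    constructor
    · intro h v
      by_cases hv : v ∈ T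
      · simp [hv, h v hv]
      · simp [hv]
    · intro h v hv
      have h2 := h v
      rw [if_pos hv] at h2
      exact h2
  rw [seedMeasure, hset, Measure.pi_pi]
  have hterm : ∀ v : TV n, bernoulliMeasure p (if v ∈ T then {true} else Set.univ)
      = if v ∈ T then ENNReal.ofReal p else 1 := by
    intro v
    by_cases hv : v ∈ T
    · rw [if_pos hv, if_pos hv]; exact bernoulli_true
    · rw [if_neg hv, if_neg hv]; exact bernoulli_univ hp0 hp1
  rw [Finset.prod_congr rfl (fun v _ => hterm v)]
  rw [Finset.prod_ite_mem Finset.univ T (fun _ => ENNReal.ofReal p)]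
  rw [Finset.univ_inter, Finset.prod_const]

def Eset (n k : ℕ) (q : TV n) (o : Bool) : Set (TV n → Bool) :=
  {f | ∀ i < k, ∃ ε, ε ≤ 1 ∧ ∃ t, t ≤ 4*k-2 ∧ f (q + cellOff n o (2*i+ε) t) = true}

lemma dynamo_subset_events {n k : ℕ} (hk : 1 ≤ k) (hn : 4*k+1 ≤ n) :
    {f : TV n → Bool | IsDynamo (torus n) {v | f v = true}} ⊆
      ⋃ q : TV n, ⋃ o : Bool, Eset n k q o := by
  intro f hf
  obtain ⟨q, o, hev⟩ := dynamo_seeds hk hn hf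
  exact Set.mem_iUnion.2 ⟨q, Set.mem_iUnion.2 ⟨o, hev⟩⟩

lemma Eset_bound {n k : ℕ} [NeZero n] {p : ℝ} (hp0 : 0 ≤ p) (hp1 : p ≤ 1)
    (hk : 1 ≤ k) (hn : 4*k+1 ≤ n) (q : TV n) (o : Bool) :
    seedMeasure (TV n) p (Eset n k q o)
      ≤ ((2*(4*k-1) : ℕ) : ENNReal)^k * ENNReal.ofReal p ^ k := by
  classical
  have hcover : Eset n k q o ⊆ ⋃ σ : Fin k → Fin 2 × Fin (4*k-1), {f : TV n → Bool |
      ∀ i : Fin k, f (q + cellOff n o (2*(i:ℕ)+((σ i).1 : ℕ)) ((σ i).2 : ℕ)) = true} := by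
    intro f hf
    have hch : ∀ i : Fin k, ∃ εt : Fin 2 × Fin (4*k-1),
        f (q + cellOff n o (2*(i:ℕ)+(εt.1:ℕ)) ((εt.2:ℕ))) = true := by
      intro i
      obtain ⟨ε, hε, t, ht, hft⟩ := hf (i:ℕ) i.2
      exact ⟨(⟨ε, by omega⟩, ⟨t, by omega⟩), hft⟩
    choose σ hσ using hch
    exact Set.mem_iUnion.2 ⟨σ, hσ⟩
  refine le_trans (measure_mono hcover) (le_trans (measure_iUnion_le _) ?_)
  have hterm : ∀ σ : Fin k → Fin 2 × Fin (4*k-1), seedMeasure (TV n) p {f : TV n → Bool |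
      ∀ i : Fin k, f (q + cellOff n o (2*(i:ℕ)+((σ i).1:ℕ)) ((σ i).2:ℕ)) = true}
      ≤ ENNReal.ofReal p ^ k := by
    intro σ
    set cell : Fin k → TV n := fun i => q + cellOff n o (2*(i:ℕ)+((σ i).1:ℕ)) ((σ i).2:ℕ)
      with hcelldef
    have hinj : Function.Injective cell := by
      intro i j hij
      rw [hcelldef] at hij
      have h2 := add_left_cancel hij
      have hs : ((2*(i:ℕ)+((σ i).1:ℕ) : ℕ) : ZMod n) = ((2*(j:ℕ)+((σ j).1:ℕ) : ℕ) : ZMod n) := by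
        cases o
        · have := congrArg Prod.snd h2
          simpa [cellOff] using this
        · have := congrArg Prod.fst h2
          simpa [cellOff] using this
      have hii : (i:ℕ) < k := i.2
      have hjj : (j:ℕ) < k := j.2
      have hσi : ((σ i).1 : ℕ) < 2 := (σ i).1.2
      have hσj : ((σ j).1 : ℕ) < 2 := (σ j).1.2
      have heq := natCast_inj_small (n := n) (by omega) (by omega) hs
      exact Fin.ext (by omega)
    have hsetEq : {f : TV n → Bool | ∀ i : Fin k, f (cell i) = true}
        = {f : TV n → Bool | ∀ v ∈ Finset.image cell Finset.univ, f v = true} := by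
      ext f
      simp only [Set.mem_setOf_eq, Finset.mem_image, Finset.mem_univ, true_and]
      constructor
      · rintro h v ⟨i, rfl⟩
        exact h i
      · intro h i
        exact h (cell i) ⟨i, rfl⟩
    apply le_of_eq
    calc seedMeasure (TV n) p {f : TV n → Bool |
        ∀ i : Fin k, f (q + cellOff n o (2*(i:ℕ)+((σ i).1:ℕ)) ((σ i).2:ℕ)) = true}
        = seedMeasure (TV n) p {f : TV n → Bool | ∀ i : Fin k, f (cell i) = true} := by
          rw [hcelldef]
      _ = ENNReal.ofReal p ^ (Finset.image cell Finset.univ).card := by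
          rw [hsetEq, cylinder hp0 hp1]
      _ = ENNReal.ofReal p ^ k := by
          rw [Finset.card_image_of_injective _ hinj, Finset.card_univ, Fintype.card_fin]
  calc (∑' σ : Fin k → Fin 2 × Fin (4*k-1), seedMeasure (TV n) p _)
      ≤ ∑' _ : Fin k → Fin 2 × Fin (4*k-1), ENNReal.ofReal p ^ k :=
        ENNReal.tsum_le_tsum hterm
    _ = (Fintype.card (Fin k → Fin 2 × Fin (4*k-1))) * ENNReal.ofReal p ^ k := by
        rw [tsum_fintype, Finset.sum_const, Finset.card_univ, nsmul_eq_mul]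
    _ = ((2*(4*k-1) : ℕ) : ENNReal)^k * ENNReal.ofReal p ^ k := by
        rw [Fintype.card_fun, Fintype.card_prod, Fintype.card_fin, Fintype.card_fin,
          Fintype.card_fin]
        push_cast
        ring

lemma mu_dynamo_le {n k : ℕ} [NeZero n] {p : ℝ} (hp0 : 0 ≤ p) (hp1 : p ≤ 1)
    (hk : 1 ≤ k) (hn : 4*k+1 ≤ n) :
    seedMeasure (TV n) p {f | IsDynamo (torus n) {v | f v = true}}
      ≤ (n : ENNReal)^2 * 2 * (((2*(4*k-1) : ℕ) : ENNReal)^k * ENNReal.ofReal p ^ k) := by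
  refine le_trans (measure_mono (dynamo_subset_events hk hn)) ?_
  refine le_trans (measure_iUnion_le _) ?_
  have h1 : ∀ q : TV n, seedMeasure (TV n) p (⋃ o : Bool, Eset n k q o)
      ≤ 2 * (((2*(4*k-1) : ℕ) : ENNReal)^k * ENNReal.ofReal p ^ k) := by
    intro q
    refine le_trans (measure_iUnion_le _) ?_
    calc (∑' o : Bool, seedMeasure (TV n) p (Eset n k q o))
        ≤ ∑' _ : Bool, (((2*(4*k-1) : ℕ) : ENNReal)^k * ENNReal.ofReal p ^ k) :=
          ENNReal.tsum_le_tsum (fun o => Eset_bound hp0 hp1 hk hn q o)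
      _ = 2 * (((2*(4*k-1) : ℕ) : ENNReal)^k * ENNReal.ofReal p ^ k) := by
          rw [tsum_fintype, Finset.sum_const, Finset.card_univ, nsmul_eq_mul]
          norm_num
  calc (∑' q : TV n, seedMeasure (TV n) p (⋃ o : Bool, Eset n k q o))
      ≤ ∑' _ : TV n, 2 * (((2*(4*k-1) : ℕ) : ENNReal)^k * ENNReal.ofReal p ^ k) :=
        ENNReal.tsum_le_tsum h1
    _ = (Fintype.card (TV n)) * (2 * (((2*(4*k-1) : ℕ) : ENNReal)^k
          * ENNReal.ofReal p ^ k)) := by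
        rw [tsum_fintype, Finset.sum_const, Finset.card_univ, nsmul_eq_mul]
    _ = (n : ENNReal)^2 * 2 * (((2*(4*k-1) : ℕ) : ENNReal)^k * ENNReal.ofReal p ^ k) := by
        have hcard : Fintype.card (TV n) = n * n := by
          rw [Fintype.card_prod, ZMod.card]
        rw [hcard]
        push_cast
        ring

end TorusProof

open TorusProof

/-- If `0 ≤ p n ≤ 0.012 / ln n` for all sufficiently large `n`, then the probability
that the random seed set `S^p` is a dynamo on the toroidal mesh of size `n` tends to `0`. -/
theorem torus_not_dynamo_whp (p : ℕ → ℝ)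
    (hp : ∀ᶠ n : ℕ in atTop, 0 ≤ p n ∧ p n ≤ 0.012 / Real.log n) :
    Tendsto
      (fun n : ℕ =>
        seedMeasure (ZMod (n + 1) × ZMod (n + 1)) (p (n + 1))
          {f | IsDynamo (torus (n + 1)) {v | f v = true}})
      atTop (nhds 0) := by
  classical
  set K : ℕ → ℕ := fun N => 2 * (⌊Real.log N⌋₊ + 1) with hKdef
  have hK1 : ∀ N, 1 ≤ K N := by
    intro N
    simp only [hKdef]
    omega
  have hKlow : ∀ N : ℕ, 2 * Real.log N ≤ (K N : ℝ) := by
    intro N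
    have h := Nat.lt_floor_add_one (Real.log N)
    simp only [hKdef]
    push_cast
    linarith
  have hKup : ∀ N : ℕ, 1 ≤ N → (K N : ℝ) ≤ 2 * Real.log N + 2 := by
    intro N hN
    have h0 : (0:ℝ) ≤ Real.log N := Real.log_nonneg (by exact_mod_cast hN)
    have h := Nat.floor_le h0
    simp only [hKdef]
    push_cast
    linarith
  have hlogN : Tendsto (fun N : ℕ => Real.log N) atTop atTop :=
    Real.tendsto_log_atTop.comp tendsto_natCast_atTop_atTop
  have hev_log16 : ∀ᶠ N : ℕ in atTop, (16:ℝ) ≤ Real.log N :=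
    hlogN.eventually_ge_atTop 16
  have hev_small : ∀ᶠ N : ℕ in atTop, Real.log N ≤ (1/16 : ℝ) * N := by
    have h := Asymptotics.isLittleO_iff.mp Real.isLittleO_log_id_atTop
      (by norm_num : (0:ℝ) < 1/16)
    have h2 := (tendsto_natCast_atTop_atTop (R := ℝ)).eventually h
    filter_upwards [h2, Filter.eventually_ge_atTop 1] with N hN hN1
    have hN0 : (1:ℝ) ≤ (N:ℝ) := by exact_mod_cast hN1
    simp only [Real.norm_eq_abs, id] at hN
    calc Real.log N ≤ |Real.log N| := le_abs_self _
      _ ≤ 1/16 * |(N:ℝ)| := hN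
      _ = 1/16 * N := by rw [abs_of_nonneg (by linarith)]
  have hev_N : ∀ᶠ N : ℕ in atTop, 4 * K N + 1 ≤ N := by
    filter_upwards [hev_small, Filter.eventually_ge_atTop 160] with N hsmall hN160
    have hN1 : 1 ≤ N := by omega
    have hKu := hKup N hN1
    have hN' : (160:ℝ) ≤ (N:ℝ) := by exact_mod_cast hN160
    have hcast : ((4 * K N + 1 : ℕ) : ℝ) ≤ (N : ℝ) := by
      push_cast
      nlinarith
    exact_mod_cast hcast
  have hshift : Tendsto (fun n : ℕ => n + 1) atTop atTop :=
    Filter.tendsto_add_atTop_nat 1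
  -- the key bound at index n (with torus size n+1)
  have hkey : ∀ᶠ n : ℕ in atTop,
      seedMeasure (ZMod (n + 1) × ZMod (n + 1)) (p (n + 1))
          {f | IsDynamo (torus (n + 1)) {v | f v = true}}
        ≤ ENNReal.ofReal (2 * ((n+1 : ℕ):ℝ)^2 * (1/4:ℝ)^(K (n+1))) := by
    filter_upwards [hshift.eventually hp, hshift.eventually hev_log16,
      hshift.eventually hev_N] with n hpN hl16 h4K
    set N : ℕ := n + 1 with hNdef
    haveI : NeZero N := ⟨by omega⟩
    obtain ⟨hp0, hp2⟩ := hpN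
    have hlogpos : (0:ℝ) < Real.log N := by linarith
    have hp012 : (0.012 : ℝ) / Real.log N ≤ 0.012 := by
      rw [div_le_iff₀ hlogpos]
      nlinarith
    have hp1 : p N ≤ 1 := by
      calc p N ≤ 0.012 / Real.log N := hp2
        _ ≤ 0.012 := hp012
        _ ≤ 1 := by norm_num
    have hN1 : 1 ≤ N := by omega
    have hbound := mu_dynamo_le (n := N) (k := K N) hp0 hp1 (hK1 N) h4K
    have hcle : ((2*(4*(K N)-1) : ℕ):ℝ) * p N ≤ 1/4 := by
      have hcle8 : ((2*(4*(K N)-1) : ℕ):ℝ) ≤ 8 * ((K N : ℕ) : ℝ) := by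
        have h8 : (2*(4*(K N)-1) : ℕ) ≤ 8 * K N := by omega
        exact_mod_cast h8
      have hKu := hKup N hN1
      have hc17 : ((2*(4*(K N)-1) : ℕ):ℝ) ≤ 17 * Real.log N := by nlinarith
      calc ((2*(4*(K N)-1) : ℕ):ℝ) * p N
          ≤ (17 * Real.log N) * (0.012 / Real.log N) :=
            mul_le_mul hc17 hp2 hp0 (by positivity)
        _ = 17 * 0.012 := by
            field_simp
        _ ≤ 1/4 := by norm_num
    have hstep1 : ((2*(4*(K N)-1) : ℕ) : ENNReal) * ENNReal.ofReal (p N)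
        ≤ ENNReal.ofReal (1/4) := by
      rw [← ENNReal.ofReal_natCast (2*(4*(K N)-1)),
        ← ENNReal.ofReal_mul (Nat.cast_nonneg _)]
      exact ENNReal.ofReal_le_ofReal hcle
    have hconv : ENNReal.ofReal (2 * (N:ℝ)^2 * (1/4:ℝ)^(K N))
        = (N : ENNReal)^2 * 2 * (ENNReal.ofReal (1/4))^(K N) := by
      rw [ENNReal.ofReal_mul (by positivity), ENNReal.ofReal_mul (by norm_num),
        ENNReal.ofReal_pow (by norm_num : (0:ℝ) ≤ 1/4),
        ENNReal.ofReal_pow (Nat.cast_nonneg N), ENNReal.ofReal_natCast,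
        ENNReal.ofReal_ofNat]
      ring
    calc seedMeasure (ZMod N × ZMod N) (p N) {f | IsDynamo (torus N) {v | f v = true}}
        ≤ (N : ENNReal)^2 * 2 * (((2*(4*(K N)-1) : ℕ) : ENNReal)^(K N)
            * ENNReal.ofReal (p N) ^ (K N)) := hbound
      _ = (N : ENNReal)^2 * 2 * (((2*(4*(K N)-1) : ℕ) : ENNReal)
            * ENNReal.ofReal (p N))^(K N) := by rw [mul_pow]
      _ ≤ (N : ENNReal)^2 * 2 * (ENNReal.ofReal (1/4))^(K N) :=
            mul_le_mul_right (pow_le_pow_left₀ zero_le hstep1 _) _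
      _ = ENNReal.ofReal (2 * (N:ℝ)^2 * (1/4:ℝ)^(K N)) := hconv.symm
  -- the real bound tends to zero
  have hconst : (1:ℝ) < Real.log 4 := by
    rw [Real.lt_log_iff_exp_lt (by norm_num : (0:ℝ) < 4)]
    calc Real.exp 1 < 2.7182818286 := Real.exp_one_lt_d9
      _ < 4 := by norm_num
  have hlog4pos : (0:ℝ) < Real.log 4 := by linarith
  have htail : Tendsto (fun N : ℕ => 2 * Real.exp ((2 - 2*Real.log 4) * Real.log N))
      atTop (nhds 0) := by
    have h2 : Tendsto (fun N : ℕ => (2*Real.log 4 - 2) * Real.log N) atTop atTop :=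
      hlogN.const_mul_atTop (by linarith)
    have h3 : Tendsto (fun N : ℕ => (2 - 2*Real.log 4) * Real.log N) atTop atBot := by
      have h4 := tendsto_neg_atTop_atBot.comp h2
      have he : (fun N : ℕ => (2 - 2*Real.log 4) * Real.log N)
          = fun N : ℕ => -((2*Real.log 4 - 2) * Real.log N) := by
        funext N; ring
      rw [he]
      exact h4
    have h5 := Real.tendsto_exp_atBot.comp h3
    have h6 := h5.const_mul (2:ℝ)
    simpa using h6
  have hble : ∀ᶠ N : ℕ in atTop, 2 * (N:ℝ)^2 * (1/4:ℝ)^(K N)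
      ≤ 2 * Real.exp ((2 - 2*Real.log 4) * Real.log N) := by
    filter_upwards [Filter.eventually_ge_atTop 1] with N hN1
    have hN0 : (0:ℝ) < (N:ℝ) := by exact_mod_cast hN1
    have hNsq : (N:ℝ)^2 = Real.exp (2 * Real.log N) := by
      rw [← Real.exp_log (show (0:ℝ) < (N:ℝ)^2 by positivity), Real.log_pow]
      norm_num
    have hlogq : Real.log ((1/4:ℝ)^(K N)) = -((K N : ℝ) * Real.log 4) := by
      rw [Real.log_pow, one_div, Real.log_inv]
      ring
    have hquarter : (1/4:ℝ)^(K N) = Real.exp (-((K N:ℝ) * Real.log 4)) := by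
      rw [← hlogq, Real.exp_log (by positivity)]
    rw [hNsq, hquarter, mul_assoc, ← Real.exp_add]
    have hlog0 : (0:ℝ) ≤ Real.log N := Real.log_nonneg (by exact_mod_cast hN1)
    have hKl := hKlow N
    have hexp : 2 * Real.log N + -((K N:ℝ) * Real.log 4)
        ≤ (2 - 2*Real.log 4) * Real.log N := by
      nlinarith [mul_le_mul_of_nonneg_right hKl (le_of_lt hlog4pos)]
    have hee := Real.exp_le_exp.mpr hexp
    linarith
  have hreal0 : Tendsto (fun N : ℕ => 2 * (N:ℝ)^2 * (1/4:ℝ)^(K N)) atTop (nhds 0) :=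
    squeeze_zero' (Filter.Eventually.of_forall (fun N => by positivity)) hble htail
  have hupper : Tendsto
      (fun n : ℕ => ENNReal.ofReal (2 * ((n+1 : ℕ):ℝ)^2 * (1/4:ℝ)^(K (n+1))))
      atTop (nhds 0) := by
    have h := ENNReal.tendsto_ofReal (hreal0.comp hshift)
    rw [ENNReal.ofReal_zero] at h
    exact h
  exact tendsto_of_tendsto_of_tendsto_of_le_of_le' tendsto_const_nhds hupper
    (Filter.Eventually.of_forall (fun n => zero_le)) hkey
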